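/- Let α = 1/(k−2). Suppose Y₂ is a balanced graph of density k−2 and X₁*, X₂* are strictly balanced subgraphs of Y₂ with density k−2 such that X₁* ∩ X₂* is a nonempty proper subgraph of both X₁* and X₂*. Then the pair (X₁* ∪ X₂*, X₁*) is α-rigid, i.e., f_α(X₁* ∪ X₂*, S) < 0 for every S with X₁* ⊆ S ⊂ X₁* ∪ X₂*, and this contradicts ρ(Y₂) = k−2; hence two distinct strictly balanced subgraphs of density k−2 in a balanced graph of density k−2 cannot properly overlap. -/
import Mathlib


/-- A finite simple graph given by a finite vertex set and a finite edge set. -/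
structure FGraph where
  verts : Finset ℕ
  edges : Finset (Sym2 ℕ)
  valid : ∀ e ∈ edges, ∀ x ∈ e, x ∈ verts
  loopless : ∀ e ∈ edges, ¬ e.IsDiag

namespace FGraph

def vcount (G : FGraph) : ℕ := G.verts.card

def ecount (G : FGraph) : ℕ := G.edges.card

/-- The density ρ(G) = e(G)/v(G). -/
def density (G : FGraph) : ℚ := (G.ecount : ℚ) / (G.vcount : ℚ)

/-- Subgraph relation. -/
def Subgraph (H G : FGraph) : Prop := H.verts ⊆ G.verts ∧ H.edges ⊆ G.edges

/-- G is balanced if every nonempty subgraph has density at most ρ(G). -/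
def Balanced (G : FGraph) : Prop :=
  ∀ H, Subgraph H G → H.verts.Nonempty → density H ≤ density G

/-- G is strictly balanced if every proper nonempty subgraph has density < ρ(G). -/
def StrictlyBalanced (G : FGraph) : Prop :=
  ∀ H, Subgraph H G → H.verts.Nonempty → H ≠ G → density H < density G

def union (G H : FGraph) : FGraph where
  verts := G.verts ∪ H.verts
  edges := G.edges ∪ H.edges
  valid := by
    intro e he x hx
    rcases Finset.mem_union.1 he with h | h
    · exact Finset.mem_union_left _ (G.valid e h x hx)
    · exact Finset.mem_union_right _ (H.valid e h x hx)
  loopless := by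
    intro e he
    rcases Finset.mem_union.1 he with h | h
    · exact G.loopless e h
    · exact H.loopless e h

def inter (G H : FGraph) : FGraph where
  verts := G.verts ∩ H.verts
  edges := G.edges ∩ H.edges
  valid := by
    intro e he x hx
    have h1 := Finset.mem_inter.1 he
    exact Finset.mem_inter.2 ⟨G.valid e h1.1 x hx, H.valid e h1.2 x hx⟩
  loopless := fun e he => G.loopless e (Finset.mem_inter.1 he).1

/-- Union of a finite family of graphs. -/
def iUnion {n : ℕ} (Y : Fin n → FGraph) : FGraph where
  verts := Finset.univ.biUnion fun i => (Y i).verts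
  edges := Finset.univ.biUnion fun i => (Y i).edges
  valid := by
    intro e he x hx
    rcases Finset.mem_biUnion.1 he with ⟨i, _, hi⟩
    exact Finset.mem_biUnion.2 ⟨i, Finset.mem_univ i, (Y i).valid e hi x hx⟩
  loopless := by
    intro e he
    rcases Finset.mem_biUnion.1 he with ⟨i, _, hi⟩
    exact (Y i).loopless e hi

/-- v(G,H), e(G,H) and f_α(G,H) = v(G,H) − α·e(G,H) for a pair of graphs. -/
def fpair (α : ℚ) (G H : FGraph) : ℚ :=
  ((G.verts \ H.verts).card : ℚ) - α * ((G.edges \ H.edges).card : ℚ)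

/-- f_α(G) = v(G) − α·e(G). -/
def fabs (α : ℚ) (G : FGraph) : ℚ := (G.vcount : ℚ) - α * (G.ecount : ℚ)

/-- Adjacency in G. -/
def Adj (G : FGraph) (x y : ℕ) : Prop := s(x, y) ∈ G.edges

/-- One step of an α-neutral chain: `K'` is obtained from `K` by attaching an α-neutral
extension over the subgraph `T` of `K`; every vertex of `T` has a neighbour among the new
vertices, no new edge joins a new vertex with a vertex of `K \ T`, the relative
`f_α` vanishes, and is positive for every strictly intermediate graph. -/
def NeutralStep (α : ℚ) (K' K T : FGraph) : Prop :=
  Subgraph K K' ∧ Subgraph T K ∧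
  (∀ x ∈ T.verts, ∃ y, y ∈ K'.verts ∧ y ∉ K.verts ∧ Adj K' x y) ∧
  (∀ e ∈ K'.edges, ∀ x ∈ e, ∀ y ∈ e,
      x ∈ K'.verts \ K.verts → y ∈ K.verts \ T.verts → False) ∧
  fpair α K' K = 0 ∧
  (∀ S, Subgraph K S → Subgraph S K' → S ≠ K → S ≠ K' → 0 < fpair α S K)

/-- (G,H) is an α-neutral chain. -/
def NeutralChain (α : ℚ) (G H : FGraph) : Prop :=
  ∃ (r : ℕ) (K T : ℕ → FGraph), K 0 = H ∧ K r = G ∧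
    ∀ i < r, NeutralStep α (K (i + 1)) (K i) (T i)

end FGraph

theorem stmt8 (k : ℕ) (hk : 4 ≤ k) (α : ℚ) (hα : α = 1 / ((k : ℚ) - 2))
    (Y₂ X₁ X₂ : FGraph)
    (hYb : FGraph.Balanced Y₂) (hYd : FGraph.density Y₂ = (k : ℚ) - 2)
    (hs1 : FGraph.Subgraph X₁ Y₂) (hs2 : FGraph.Subgraph X₂ Y₂)
    (hsb1 : FGraph.StrictlyBalanced X₁) (hsb2 : FGraph.StrictlyBalanced X₂)
    (hd1 : FGraph.density X₁ = (k : ℚ) - 2) (hd2 : FGraph.density X₂ = (k : ℚ) - 2)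
    (hne : ((FGraph.inter X₁ X₂).verts).Nonempty)
    (hp1 : FGraph.inter X₁ X₂ ≠ X₁) (hp2 : FGraph.inter X₁ X₂ ≠ X₂) :
    False := by
  classical
  set I := FGraph.inter X₁ X₂ with hI
  set U := FGraph.union X₁ X₂ with hU
  have hIsub1 : FGraph.Subgraph I X₁ :=
    ⟨Finset.inter_subset_left, Finset.inter_subset_left⟩
  have hIlt : FGraph.density I < (k : ℚ) - 2 := hd1 ▸ hsb1 I hIsub1 hne hp1
  have hUsub : FGraph.Subgraph U Y₂ :=
    ⟨Finset.union_subset hs1.1 hs2.1, Finset.union_subset hs1.2 hs2.2⟩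
  have hUne : U.verts.Nonempty := by
    obtain ⟨x, hx⟩ := hne
    exact ⟨x, Finset.mem_union_left _ (Finset.mem_inter.1 hx).1⟩
  have hUle : FGraph.density U ≤ (k : ℚ) - 2 := hYd ▸ hYb U hUsub hUne
  -- cardinalities
  have hv : U.vcount + I.vcount = X₁.vcount + X₂.vcount :=
    Finset.card_union_add_card_inter _ _
  have he : U.ecount + I.ecount = X₁.ecount + X₂.ecount :=
    Finset.card_union_add_card_inter _ _
  have hvIpos : 0 < (I.vcount : ℚ) := by
    exact_mod_cast Finset.card_pos.2 hne
  have hv1pos : 0 < (X₁.vcount : ℚ) := by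
    exact_mod_cast Finset.card_pos.2 ⟨hne.choose, hIsub1.1 hne.choose_spec⟩
  have hv2pos : 0 < (X₂.vcount : ℚ) := by
    have : FGraph.Subgraph I X₂ :=
      ⟨Finset.inter_subset_right, Finset.inter_subset_right⟩
    exact_mod_cast Finset.card_pos.2 ⟨hne.choose, this.1 hne.choose_spec⟩
  have hvUpos : 0 < (U.vcount : ℚ) := by
    exact_mod_cast Finset.card_pos.2 hUne
  have hIe : (I.ecount : ℚ) < ((k : ℚ) - 2) * I.vcount := by
    have := (div_lt_iff₀ hvIpos).1 hIlt
    simpa [FGraph.density] using this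
  have h1e : (X₁.ecount : ℚ) = ((k : ℚ) - 2) * X₁.vcount := by
    have := hd1
    rw [FGraph.density, div_eq_iff (ne_of_gt hv1pos)] at this
    linarith [this]
  have h2e : (X₂.ecount : ℚ) = ((k : ℚ) - 2) * X₂.vcount := by
    have := hd2
    rw [FGraph.density, div_eq_iff (ne_of_gt hv2pos)] at this
    linarith [this]
  have hUe : (U.ecount : ℚ) ≤ ((k : ℚ) - 2) * U.vcount := by
    have := (div_le_iff₀ hvUpos).1 hUle
    simpa [FGraph.density] using this
  have hvq : (U.vcount : ℚ) + I.vcount = X₁.vcount + X₂.vcount := by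
    exact_mod_cast congrArg (fun n : ℕ => (n : ℚ)) hv
  have heq : (U.ecount : ℚ) + I.ecount = X₁.ecount + X₂.ecount := by
    exact_mod_cast congrArg (fun n : ℕ => (n : ℚ)) he
  nlinarith [hUe, hIe, h1e, h2e, hvq, heq]
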